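/- For every real δ > 0 there exists q₀ such that for all integers q ≥ q₀ and all integers b with b ≥ (1+δ)·q·log q, the reconstruction problem for the b-ary tree T_b and the q-coloring channel (the q-state channel with M_{i,i} = 0 and M_{i,j} = 1/(q−1) for i ≠ j) is solvable. -/

import Mathlib

open Filter Finset

/-- The distribution of the configuration at level `n` of the `b`-ary tree,
for the broadcast process with channel `M`, given that the root has value `i`.
Vertices at level `n` are encoded as paths `Fin n → Fin b`. -/
noncomputable def levelDist {A : Type} [Fintype A] [DecidableEq A]
    (M : A → A → ℝ) (b : ℕ) (i : A) : (n : ℕ) → ((Fin n → Fin b) → A) → ℝ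
  | 0 => fun σ => if σ = (fun _ => i) then 1 else 0
  | n + 1 => fun τ => ∑ σ : (Fin n → Fin b) → A, levelDist M b i n σ *
      ∏ w : Fin (n + 1) → Fin b, M (σ fun m => w m.castSucc) (τ w)

/-- Total variation distance between two (densities of) probability measures
on a finite set. -/
noncomputable def tvDist {Ω : Type*} [Fintype Ω] (P Q : Ω → ℝ) : ℝ :=
  (1 / 2) * ∑ σ, |P σ - Q σ|

/-- The `q`-coloring channel: `M i i = 0` and `M i j = 1/(q-1)` for `i ≠ j`. -/
noncomputable def coloring (q : ℕ) : Fin q → Fin q → ℝ :=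
  fun i j => if i = j then 0 else ((q : ℝ) - 1)⁻¹

lemma sum_prod_pi {V A : Type*} [Fintype V] [DecidableEq V] [Fintype A] (f : V → A → ℝ) :
    ∑ τ : V → A, ∏ w, f w (τ w) = ∏ w, ∑ a, f w a := by
  rw [Finset.prod_univ_sum, Fintype.piFinset_univ]

lemma levelDist_nonneg {A : Type} [Fintype A] [DecidableEq A] {M : A → A → ℝ}
    (hM : ∀ i j, 0 ≤ M i j) (b : ℕ) (i : A) : ∀ n τ, 0 ≤ levelDist M b i n τ
  | 0, τ => by unfold levelDist; positivity
  | n+1, τ => by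
      unfold levelDist
      exact Finset.sum_nonneg fun σ _ => mul_nonneg (levelDist_nonneg hM b i n σ)
        (Finset.prod_nonneg fun w _ => hM _ _)

lemma levelDist_sum_one {A : Type} [Fintype A] [DecidableEq A] {M : A → A → ℝ}
    (hM : ∀ i, ∑ j, M i j = 1) (b : ℕ) (i : A) : ∀ n, ∑ τ, levelDist M b i n τ = 1
  | 0 => by simp [levelDist]
  | n+1 => by
      unfold levelDist
      rw [Finset.sum_comm]
      have h : ∀ σ : (Fin n → Fin b) → A,
          ∑ τ : (Fin (n+1) → Fin b) → A, levelDist M b i n σ *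
            ∏ w, M (σ fun m => w m.castSucc) (τ w) = levelDist M b i n σ := by
        intro σ
        rw [← Finset.mul_sum, sum_prod_pi]
        simp [hM]
      simp_rw [h]
      exact levelDist_sum_one hM b i n

lemma coloring_nonneg {q : ℕ} (hq : 1 ≤ q) (i j : Fin q) : 0 ≤ coloring q i j := by
  unfold coloring
  have h1 : (1:ℝ) ≤ (q:ℝ) := by exact_mod_cast hq
  split
  · exact le_refl 0
  · exact inv_nonneg.mpr (by linarith)

lemma coloring_sum {q : ℕ} (hq : 2 ≤ q) (i : Fin q) : ∑ j, coloring q i j = 1 := by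
  unfold coloring
  have h1 : ∀ j : Fin q, (if i = j then (0:ℝ) else ((q:ℝ)-1)⁻¹) =
      ((q:ℝ)-1)⁻¹ - (if i = j then ((q:ℝ)-1)⁻¹ else 0) := by
    intro j; split <;> ring
  simp_rw [h1]
  rw [Finset.sum_sub_distrib, Finset.sum_const, Finset.sum_ite_eq, if_pos (Finset.mem_univ i),
    Finset.card_univ, Fintype.card_fin]
  have hq1 : (q:ℝ) - 1 ≠ 0 := by
    have : (2:ℝ) ≤ (q:ℝ) := by exact_mod_cast hq
    intro h; nlinarith
  rw [nsmul_eq_mul, show (q:ℝ) * ((q:ℝ)-1)⁻¹ - ((q:ℝ)-1)⁻¹ = ((q:ℝ)-1) * ((q:ℝ)-1)⁻¹ by ring,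
    mul_inv_cancel₀ hq1]

/-- the configuration `ω` at level `n` determines the root color to be `j` -/
def DetP (q b n : ℕ) (j : Fin q) (ω : (Fin n → Fin b) → Fin q) : Prop :=
  ∀ c, c ≠ j → levelDist (coloring q) b c n ω = 0

open Classical in
/-- probability of the event at level `n` that the configuration determines the root color `j` -/
noncomputable def pdet (q b n : ℕ) (j : Fin q) : ℝ :=
  ∑ ω : (Fin n → Fin b) → Fin q,
    if DetP q b n j ω then levelDist (coloring q) b j n ω else 0

open Classical in
lemma pdet_zero {q b : ℕ} (j : Fin q) : pdet q b 0 j = 1 := by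
  unfold pdet
  rw [Finset.sum_eq_single (fun _ => j : (Fin 0 → Fin b) → Fin q)]
  · have hdet : DetP q b 0 j (fun _ => j) := by
      intro c hc
      simp only [levelDist]
      rw [if_neg]
      intro h
      exact hc (congrFun h Fin.elim0).symm
    rw [if_pos hdet]
    simp [levelDist]
  · intro ω _ hω
    split
    · simp only [levelDist]; rw [if_neg hω]
    · rfl
  · intro h; exact absurd (Finset.mem_univ _) h

open Classical in
lemma pdet_le_one {q b : ℕ} (hq : 2 ≤ q) (n : ℕ) (j : Fin q) : pdet q b n j ≤ 1 := by
  unfold pdet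
  rw [← levelDist_sum_one (coloring_sum hq) b j n]
  refine Finset.sum_le_sum fun ω _ => ?_
  split
  · exact le_refl _
  · exact levelDist_nonneg (fun i j => coloring_nonneg (by omega) i j) b j n ω

open Classical in
/-- one-sided union bound, density form -/
lemma union_bound {Ω' J : Type*} [Fintype Ω'] (μ : Ω' → ℝ) (hμ : ∀ ω, 0 ≤ μ ω)
    (hμ1 : ∑ ω, μ ω = 1) (s : Finset J) (A : J → Ω' → Prop) (C : Ω' → Prop)
    (hC : ∀ ω, (∀ j ∈ s, A j ω) → C ω) :
    1 - ∑ j ∈ s, ∑ ω, (if A j ω then 0 else μ ω) ≤ ∑ ω, if C ω then μ ω else 0 := by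
  have hnn : ∀ (j : J) (ω : Ω'), 0 ≤ if A j ω then 0 else μ ω := fun j ω => by
    split
    · exact le_refl 0
    · exact hμ ω
  have key : ∀ ω, μ ω - (if C ω then μ ω else 0) ≤
      ∑ j ∈ s, (if A j ω then 0 else μ ω) := by
    intro ω
    by_cases h : C ω
    · rw [if_pos h, sub_self]
      exact Finset.sum_nonneg fun j _ => hnn j ω
    · rw [if_neg h, sub_zero]
      have h2 : ¬ ∀ j ∈ s, A j ω := fun hall => h (hC ω hall)
      push_neg at h2
      obtain ⟨j0, hj0, hA⟩ := h2
      have h3 := Finset.single_le_sum (f := fun j => if A j ω then 0 else μ ω)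
        (fun j _ => hnn j ω) hj0
      simp only [if_neg hA] at h3
      exact h3
  have h2 := Finset.sum_le_sum (fun ω (_ : ω ∈ Finset.univ) => key ω)
  rw [Finset.sum_sub_distrib, hμ1, Finset.sum_comm] at h2
  linarith

/-- some subtree configuration determines color `j` -/
def ExDet (q b n : ℕ) (j : Fin q) (g : Fin b → (Fin n → Fin b) → Fin q) : Prop :=
  ∃ k : Fin b, DetP q b n j (g k)

/-- every color other than `i` is determined by some subtree -/
def Cov (q b n : ℕ) (i : Fin q) (g : Fin b → (Fin n → Fin b) → Fin q) : Prop :=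
  ∀ j, j ≠ i → ExDet q b n j g

lemma cons_comp_castSucc {n b : ℕ} (k : Fin b) (w : Fin (n+1) → Fin b) :
    (fun m : Fin (n+1) => (Fin.cons k w : Fin (n+2) → Fin b) m.castSucc) =
      (Fin.cons k (fun m : Fin n => w m.castSucc) : Fin (n+1) → Fin b) := by
  funext m
  refine Fin.cases ?_ ?_ m
  · simp
  · intro j
    have h : (Fin.succ j).castSucc = (j.castSucc).succ := (Fin.succ_castSucc _).symm
    simp only [h, Fin.cons_succ]

def resEquiv (b n : ℕ) (A : Type) : ((Fin (n+1) → Fin b) → A) ≃ (Fin b → (Fin n → Fin b) → A) where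
  toFun τ k w := τ (Fin.cons k w)
  invFun g ρ := g (ρ 0) (Fin.tail ρ)
  left_inv τ := by funext ρ; simp [Fin.tail, Fin.cons_self_tail]
  right_inv g := by funext k w; simp [Fin.tail_cons]

def consEquiv' (b n : ℕ) : Fin b × (Fin n → Fin b) ≃ (Fin (n+1) → Fin b) where
  toFun p := Fin.cons p.1 p.2
  invFun ρ := (ρ 0, Fin.tail ρ)
  left_inv p := by simp [Fin.tail_cons]
  right_inv ρ := by simp [Fin.cons_self_tail]

lemma levelDist_succ' {A : Type} [Fintype A] [DecidableEq A] (M : A → A → ℝ) (b : ℕ) :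
    ∀ (n : ℕ) (i : A) (τ : (Fin (n+1) → Fin b) → A),
    levelDist M b i (n+1) τ = ∑ c : Fin b → A, (∏ k, M i (c k)) *
      ∏ k, levelDist M b (c k) n (fun w => τ (Fin.cons k w)) := by
  intro n
  induction n with
  | zero =>
    intro i τ
    show (∑ σ : (Fin 0 → Fin b) → A, (if σ = fun _ => i then 1 else 0) *
        ∏ w : Fin 1 → Fin b, M (σ fun m => w m.castSucc) (τ w)) = _
    rw [Finset.sum_eq_single (fun _ => i : (Fin 0 → Fin b) → A)]
    rotate_left
    · intro σ _ hσ; simp [hσ]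
    · intro h; exact absurd (Finset.mem_univ _) h
    · rw [if_pos rfl, one_mul]
      simp only [levelDist]
      have hnice : ∀ (k : Fin b) (a : A),
          ((fun w : Fin 0 → Fin b => τ (Fin.cons k w)) = fun _ => a) ↔
            (τ (Fin.cons k Fin.elim0) = a) := by
        intro k a
        constructor
        · intro h; exact congrFun h Fin.elim0
        · intro h; funext w
          have : w = Fin.elim0 := Subsingleton.elim _ _
          rw [this, h]
      simp_rw [← Finset.prod_mul_distrib, hnice]
      rw [show (∑ c : Fin b → A, ∏ k, (M i (c k) *
            if τ (Fin.cons k Fin.elim0) = c k then (1:ℝ) else 0)) =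
          ∏ k, ∑ a, (M i a * if τ (Fin.cons k Fin.elim0) = a then (1:ℝ) else 0) from
        sum_prod_pi (fun k a => M i a * if τ (Fin.cons k Fin.elim0) = a then (1:ℝ) else 0)]
      have h2 : ∀ k : Fin b,
          (∑ a, M i a * if τ (Fin.cons k Fin.elim0) = a then (1:ℝ) else 0)
            = M i (τ (Fin.cons k Fin.elim0)) := by
        intro k; simp [mul_ite]
      simp_rw [h2]
      refine (Fintype.prod_equiv ((Equiv.funUnique (Fin 1) (Fin b)).symm) _ _ fun k => ?_).symm
      congr 1
      congr 1
      funext x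
      have hx : x = 0 := by
        have := x.isLt; exact Fin.ext (by omega)
      subst hx
      simp [Equiv.funUnique]
  | succ n ih =>
    intro i τ
    show (∑ σ : (Fin (n+1) → Fin b) → A, levelDist M b i (n+1) σ *
        ∏ w : Fin (n+2) → Fin b, M (σ fun m => w m.castSucc) (τ w)) = _
    have hB : ∀ σ : (Fin (n+1) → Fin b) → A,
        (∏ w : Fin (n+2) → Fin b, M (σ fun m => w m.castSucc) (τ w)) =
        ∏ k : Fin b, ∏ w' : Fin (n+1) → Fin b,
          M (σ (Fin.cons k (fun m => w' m.castSucc))) (τ (Fin.cons k w')) := by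
      intro σ
      rw [← Fintype.prod_prod_type (f := fun p : Fin b × (Fin (n+1) → Fin b) =>
        M (σ (Fin.cons p.1 (fun m => p.2 m.castSucc))) (τ (Fin.cons p.1 p.2)))]
      refine (Fintype.prod_equiv (consEquiv' b (n+1)) _ _ fun p => ?_).symm
      simp only [consEquiv', Equiv.coe_fn_mk]
      rw [cons_comp_castSucc]
    simp_rw [hB, ih i]
    simp_rw [Finset.sum_mul]
    rw [Finset.sum_comm]
    refine Finset.sum_congr rfl fun c _ => ?_
    simp_rw [mul_assoc]
    rw [← Finset.mul_sum]
    congr 1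
    simp_rw [← Finset.prod_mul_distrib]
    calc ∑ σ : (Fin (n+1) → Fin b) → A, ∏ k,
          (levelDist M b (c k) n (fun w => σ (Fin.cons k w)) *
            ∏ w' : Fin (n+1) → Fin b, M (σ (Fin.cons k (fun m => w' m.castSucc))) (τ (Fin.cons k w')))
        = ∑ g : Fin b → ((Fin n → Fin b) → A), ∏ k,
          (levelDist M b (c k) n (g k) *
            ∏ w' : Fin (n+1) → Fin b, M (g k (fun m => w' m.castSucc)) (τ (Fin.cons k w'))) :=
          Fintype.sum_equiv (resEquiv b n A) _ _ (fun σ => rfl)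
      _ = ∏ k, ∑ ω : (Fin n → Fin b) → A,
          (levelDist M b (c k) n ω *
            ∏ w' : Fin (n+1) → Fin b, M (ω (fun m => w' m.castSucc)) (τ (Fin.cons k w'))) :=
          sum_prod_pi (fun k ω => levelDist M b (c k) n ω *
            ∏ w' : Fin (n+1) → Fin b, M (ω (fun m => w' m.castSucc)) (τ (Fin.cons k w')))
      _ = ∏ k, levelDist M b (c k) (n+1) (fun w => τ (Fin.cons k w)) :=
          Finset.prod_congr rfl fun k _ => by simp only [levelDist]
open Classical in
lemma pdet_rec {q b : ℕ} (hq : 2 ≤ q) {p : ℝ} (hp0 : 0 ≤ p) (hp1 : p ≤ 1) (n : ℕ)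
    (hp : ∀ j, p ≤ pdet q b n j) (i : Fin q) :
    1 - ((q:ℝ) - 1) * (1 - p * ((q:ℝ)-1)⁻¹)^b ≤ pdet q b (n+1) i := by
  have hq1 : 1 ≤ q := by omega
  have hMnn : ∀ (u v : Fin q), 0 ≤ coloring q u v := coloring_nonneg hq1
  have hMsum : ∀ u : Fin q, ∑ v, coloring q u v = 1 := coloring_sum hq
  have hPnn : ∀ (c : Fin q) (m : ℕ) (ω : (Fin m → Fin b) → Fin q),
      0 ≤ levelDist (coloring q) b c m ω := fun c m ω => levelDist_nonneg hMnn b c m ω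
  have hPsum : ∀ (c : Fin q) (m : ℕ), ∑ ω, levelDist (coloring q) b c m ω = 1 :=
    fun c m => levelDist_sum_one hMsum b c m
  -- Step 1 : restricting to the event that every other color is detected in some subtree
  have step1 : (∑ τ : (Fin (n+1) → Fin b) → Fin q,
      if Cov q b n i (fun k w => τ (Fin.cons k w))
      then levelDist (coloring q) b i (n+1) τ else 0) ≤ pdet q b (n+1) i := by
    unfold pdet
    refine Finset.sum_le_sum fun τ _ => ?_
    by_cases hB : Cov q b n i (fun k w => τ (Fin.cons k w))
    · rw [if_pos hB, if_pos]
      intro j hj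
      rw [levelDist_succ']
      refine Finset.sum_eq_zero fun c _ => ?_
      obtain ⟨k, hk⟩ := hB j hj
      by_cases hc : c k = j
      · refine mul_eq_zero.2 (Or.inl ?_)
        refine Finset.prod_eq_zero (Finset.mem_univ k) ?_
        rw [hc]
        simp [coloring]
      · exact mul_eq_zero.2 (Or.inr (Finset.prod_eq_zero (Finset.mem_univ k) (hk (c k) hc)))
    · rw [if_neg hB]
      split
      · exact hPnn i (n+1) τ
      · exact le_refl 0
  -- Step 2 : rewrite the sum via the subtree decomposition
  have step2 : (∑ τ : (Fin (n+1) → Fin b) → Fin q,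
      if Cov q b n i (fun k w => τ (Fin.cons k w))
      then levelDist (coloring q) b i (n+1) τ else 0)
      = ∑ c : Fin b → Fin q, (∏ k, coloring q i (c k)) *
          (∑ g : Fin b → (Fin n → Fin b) → Fin q,
            if Cov q b n i g
            then ∏ k, levelDist (coloring q) b (c k) n (g k) else 0) := by
    simp_rw [levelDist_succ']
    have h1 : ∀ τ : (Fin (n+1) → Fin b) → Fin q,
        (if Cov q b n i (fun k w => τ (Fin.cons k w))
          then (∑ c : Fin b → Fin q, (∏ k, coloring q i (c k)) *
            ∏ k, levelDist (coloring q) b (c k) n (fun w => τ (Fin.cons k w))) else 0)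
        = ∑ c : Fin b → Fin q, (∏ k, coloring q i (c k)) *
            (if Cov q b n i (fun k w => τ (Fin.cons k w))
              then ∏ k, levelDist (coloring q) b (c k) n (fun w => τ (Fin.cons k w)) else 0) := by
      intro τ
      split
      · rfl
      · simp
    simp_rw [h1]
    rw [Finset.sum_comm]
    refine Finset.sum_congr rfl fun c _ => ?_
    rw [← Finset.mul_sum]
    congr 1
    exact Fintype.sum_equiv (resEquiv b n (Fin q)) _ _ fun τ => rfl
  -- Step 3 : per-children-coloring union bound
  have step3 : ∀ c : Fin b → Fin q,
      1 - ∑ j ∈ Finset.univ.erase i, ∏ k : Fin b, (1 - if c k = j then p else 0) ≤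
      ∑ g : Fin b → (Fin n → Fin b) → Fin q,
        if Cov q b n i g
        then ∏ k, levelDist (coloring q) b (c k) n (g k) else 0 := by
    intro c
    have hμnn : ∀ g : Fin b → (Fin n → Fin b) → Fin q,
        0 ≤ ∏ k, levelDist (coloring q) b (c k) n (g k) :=
      fun g => Finset.prod_nonneg fun k _ => hPnn _ _ _
    have hμ1 : ∑ g : Fin b → (Fin n → Fin b) → Fin q,
        ∏ k, levelDist (coloring q) b (c k) n (g k) = 1 := by
      rw [sum_prod_pi (fun k ω => levelDist (coloring q) b (c k) n ω)]
      exact Finset.prod_eq_one fun k _ => hPsum (c k) n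
    have hC : ∀ g : Fin b → (Fin n → Fin b) → Fin q,
        (∀ j ∈ Finset.univ.erase i, ExDet q b n j g) → Cov q b n i g := by
      intro g h j hj
      exact h j (Finset.mem_erase.2 ⟨hj, Finset.mem_univ j⟩)
    have hub := union_bound _ hμnn hμ1 (Finset.univ.erase i)
      (fun (j : Fin q) (g : Fin b → (Fin n → Fin b) → Fin q) => ExDet q b n j g)
      (Cov q b n i) hC
    refine le_trans ?_ hub
    refine sub_le_sub_left (Finset.sum_le_sum fun j _ => ?_) 1
    -- bound each "color j not detected anywhere" probability
    have e0 : ∀ g : Fin b → (Fin n → Fin b) → Fin q,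
        (if ExDet q b n j g then (0:ℝ) else ∏ k, levelDist (coloring q) b (c k) n (g k))
        = ∏ k, (if DetP q b n j (g k) then (0:ℝ) else levelDist (coloring q) b (c k) n (g k)) := by
      intro g
      by_cases h : ExDet q b n j g
      · rw [if_pos h]
        obtain ⟨k0, hk0⟩ := h
        refine (Finset.prod_eq_zero (Finset.mem_univ k0) ?_).symm
        exact if_pos hk0
      · rw [if_neg h]
        refine Finset.prod_congr rfl fun k _ => ?_
        rw [if_neg (fun hk => h ⟨k, hk⟩)]
    calc (∑ g : Fin b → (Fin n → Fin b) → Fin q,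
          if ExDet q b n j g then (0:ℝ) else ∏ k, levelDist (coloring q) b (c k) n (g k))
        = ∑ g : Fin b → (Fin n → Fin b) → Fin q,
            ∏ k, (if DetP q b n j (g k) then (0:ℝ)
              else levelDist (coloring q) b (c k) n (g k)) :=
          Finset.sum_congr rfl fun g _ => e0 g
      _ = ∏ k : Fin b, ∑ ω : (Fin n → Fin b) → Fin q,
            (if DetP q b n j ω then (0:ℝ) else levelDist (coloring q) b (c k) n ω) :=
          sum_prod_pi (fun k ω => if DetP q b n j ω then (0:ℝ)
            else levelDist (coloring q) b (c k) n ω)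
      _ ≤ ∏ k : Fin b, (1 - if c k = j then p else 0) := ?_
    refine Finset.prod_le_prod (fun k _ => ?_) (fun k _ => ?_)
    · refine Finset.sum_nonneg fun ω _ => ?_
      split
      · exact le_refl 0
      · exact hPnn _ _ _
    · have e2 : (∑ ω : (Fin n → Fin b) → Fin q,
          if DetP q b n j ω then (0:ℝ) else levelDist (coloring q) b (c k) n ω)
          = 1 - ∑ ω : (Fin n → Fin b) → Fin q,
              (if DetP q b n j ω then levelDist (coloring q) b (c k) n ω else 0) := by
        rw [← hPsum (c k) n, ← Finset.sum_sub_distrib]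
        refine Finset.sum_congr rfl fun ω _ => ?_
        by_cases hD : DetP q b n j ω
        · rw [if_pos hD, if_pos hD, sub_self]
        · rw [if_neg hD, if_neg hD, sub_zero]
      rw [e2]
      by_cases hcj : c k = j
      · rw [if_pos hcj, hcj]
        have hpj := hp j
        unfold pdet at hpj
        linarith
      · rw [if_neg hcj, sub_zero]
        have h0 : 0 ≤ ∑ ω : (Fin n → Fin b) → Fin q,
            (if DetP q b n j ω then levelDist (coloring q) b (c k) n ω else 0) := by
          refine Finset.sum_nonneg fun ω _ => ?_
          split
          · exact hPnn _ _ _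
          · exact le_refl 0
        linarith
  -- Step 4 : averaging over the children colors
  have hWnn : ∀ c : Fin b → Fin q, 0 ≤ ∏ k, coloring q i (c k) :=
    fun c => Finset.prod_nonneg fun k _ => hMnn _ _
  have hWsum : ∑ c : Fin b → Fin q, ∏ k, coloring q i (c k) = 1 := by
    rw [sum_prod_pi (fun (_ : Fin b) (a : Fin q) => coloring q i a)]
    exact Finset.prod_eq_one fun k _ => hMsum i
  have step4 : ∑ c : Fin b → Fin q, (∏ k, coloring q i (c k)) *
      (1 - ∑ j ∈ Finset.univ.erase i, ∏ k : Fin b, (1 - if c k = j then p else 0))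
      = 1 - ((q:ℝ) - 1) * (1 - p * ((q:ℝ)-1)⁻¹)^b := by
    have hinner : ∀ j ∈ Finset.univ.erase i,
        (∑ c : Fin b → Fin q, (∏ k, coloring q i (c k)) *
          ∏ k : Fin b, (1 - if c k = j then p else 0))
        = (1 - p * ((q:ℝ)-1)⁻¹)^b := by
      intro j hj
      have hji : j ≠ i := (Finset.mem_erase.1 hj).1
      have e3 : (∑ c : Fin b → Fin q, (∏ k, coloring q i (c k)) *
          ∏ k : Fin b, (1 - if c k = j then p else 0))
          = ∏ k : Fin b, ∑ a : Fin q, coloring q i a * (1 - if a = j then p else 0) := by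
        rw [← sum_prod_pi (fun (k : Fin b) (a : Fin q) =>
          coloring q i a * (1 - if a = j then p else 0))]
        refine Finset.sum_congr rfl fun c _ => ?_
        rw [← Finset.prod_mul_distrib]
      rw [e3]
      have e4 : (∑ a : Fin q, coloring q i a * (1 - if a = j then p else 0))
          = 1 - p * ((q:ℝ)-1)⁻¹ := by
        have e5 : ∀ a : Fin q, coloring q i a * (1 - if a = j then p else 0)
            = coloring q i a - (if a = j then coloring q i a * p else 0) := by
          intro a; split <;> ring
        simp_rw [e5]
        rw [Finset.sum_sub_distrib, hMsum i, Finset.sum_ite_eq' Finset.univ j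
          (fun a => coloring q i a * p), if_pos (Finset.mem_univ j)]
        have hcj : coloring q i j = ((q:ℝ)-1)⁻¹ := by
          unfold coloring
          rw [if_neg (Ne.symm hji)]
        rw [hcj]
        ring
      rw [e4, Finset.prod_const, Finset.card_univ, Fintype.card_fin]
    have hcount : (Finset.univ.erase i).card = q - 1 := by
      rw [Finset.card_erase_of_mem (Finset.mem_univ i), Finset.card_univ, Fintype.card_fin]
    have e7 : ∀ c : Fin b → Fin q, (∏ k, coloring q i (c k)) *
        (1 - ∑ j ∈ Finset.univ.erase i, ∏ k : Fin b, (1 - if c k = j then p else 0))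
        = (∏ k, coloring q i (c k)) - ∑ j ∈ Finset.univ.erase i,
            (∏ k, coloring q i (c k)) * ∏ k : Fin b, (1 - if c k = j then p else 0) := by
      intro c
      rw [mul_one_sub, Finset.mul_sum]
    simp_rw [e7]
    rw [Finset.sum_sub_distrib, hWsum, Finset.sum_comm]
    rw [Finset.sum_congr rfl hinner, Finset.sum_const, hcount, nsmul_eq_mul]
    have hcast : ((q - 1 : ℕ) : ℝ) = (q:ℝ) - 1 := by
      push_cast [Nat.cast_sub hq1]
      ring
    rw [hcast]
  -- put everything together
  calc 1 - ((q:ℝ) - 1) * (1 - p * ((q:ℝ)-1)⁻¹)^b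
      = ∑ c : Fin b → Fin q, (∏ k, coloring q i (c k)) *
        (1 - ∑ j ∈ Finset.univ.erase i, ∏ k : Fin b, (1 - if c k = j then p else 0)) :=
        step4.symm
    _ ≤ ∑ c : Fin b → Fin q, (∏ k, coloring q i (c k)) *
          (∑ g : Fin b → (Fin n → Fin b) → Fin q,
            if Cov q b n i g
            then ∏ k, levelDist (coloring q) b (c k) n (g k) else 0) :=
        Finset.sum_le_sum fun c _ => mul_le_mul_of_nonneg_left (step3 c) (hWnn c)
    _ = _ := step2.symm
    _ ≤ pdet q b (n+1) i := step1
lemma tv_nonneg {Ω : Type*} [Fintype Ω] (P Q : Ω → ℝ) : 0 ≤ tvDist P Q := by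
  unfold tvDist
  have : 0 ≤ ∑ σ, |P σ - Q σ| := Finset.sum_nonneg fun σ _ => abs_nonneg _
  linarith

/-- data processing inequality: total variation only decreases down the tree -/
lemma tv_mono {q b : ℕ} (hq : 2 ≤ q) (i j : Fin q) (n : ℕ) :
    tvDist (levelDist (coloring q) b i (n+1)) (levelDist (coloring q) b j (n+1)) ≤
    tvDist (levelDist (coloring q) b i n) (levelDist (coloring q) b j n) := by
  have hMnn : ∀ (u v : Fin q), 0 ≤ coloring q u v := coloring_nonneg (by omega)
  have hMsum : ∀ u : Fin q, ∑ v, coloring q u v = 1 := coloring_sum hq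
  unfold tvDist
  have h2 : ∀ τ : (Fin (n+1) → Fin b) → Fin q,
      |levelDist (coloring q) b i (n+1) τ - levelDist (coloring q) b j (n+1) τ|
      ≤ ∑ σ : (Fin n → Fin b) → Fin q,
          |levelDist (coloring q) b i n σ - levelDist (coloring q) b j n σ| *
          ∏ w : Fin (n+1) → Fin b, coloring q (σ fun m => w m.castSucc) (τ w) := by
    intro τ
    have e1 : levelDist (coloring q) b i (n+1) τ - levelDist (coloring q) b j (n+1) τ
        = ∑ σ : (Fin n → Fin b) → Fin q,
            (levelDist (coloring q) b i n σ - levelDist (coloring q) b j n σ) *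
            ∏ w : Fin (n+1) → Fin b, coloring q (σ fun m => w m.castSucc) (τ w) := by
      show (∑ σ : (Fin n → Fin b) → Fin q, levelDist (coloring q) b i n σ *
          ∏ w : Fin (n+1) → Fin b, coloring q (σ fun m => w m.castSucc) (τ w))
          - (∑ σ : (Fin n → Fin b) → Fin q, levelDist (coloring q) b j n σ *
          ∏ w : Fin (n+1) → Fin b, coloring q (σ fun m => w m.castSucc) (τ w)) = _
      rw [← Finset.sum_sub_distrib]
      exact Finset.sum_congr rfl fun σ _ => (sub_mul _ _ _).symm
    rw [e1]
    refine (Finset.abs_sum_le_sum_abs _ _).trans ?_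
    refine Finset.sum_le_sum fun σ _ => ?_
    rw [abs_mul, abs_of_nonneg (Finset.prod_nonneg fun w _ => hMnn _ _)]
  have h3 := Finset.sum_le_sum (fun τ (_ : τ ∈ Finset.univ) => h2 τ)
  have h4 : ∑ τ : (Fin (n+1) → Fin b) → Fin q, ∑ σ : (Fin n → Fin b) → Fin q,
      |levelDist (coloring q) b i n σ - levelDist (coloring q) b j n σ| *
      ∏ w : Fin (n+1) → Fin b, coloring q (σ fun m => w m.castSucc) (τ w)
      = ∑ σ : (Fin n → Fin b) → Fin q,
        |levelDist (coloring q) b i n σ - levelDist (coloring q) b j n σ| := by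
    rw [Finset.sum_comm]
    refine Finset.sum_congr rfl fun σ _ => ?_
    rw [← Finset.mul_sum, sum_prod_pi (fun (w : Fin (n+1) → Fin b) (a : Fin q) => coloring q (σ fun m => w m.castSucc) a)]
    simp [hMsum]
  rw [h4] at h3
  linarith
/-- the determination event gives a lower bound for total variation -/
lemma tv_ge {q b : ℕ} (n : ℕ) {i j : Fin q} (hij : j ≠ i)
    (hnn : ∀ ω, 0 ≤ levelDist (coloring q) b i n ω) :
    pdet q b n i ≤ 2 * tvDist (levelDist (coloring q) b i n) (levelDist (coloring q) b j n) := by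
  have h : pdet q b n i ≤ ∑ ω : (Fin n → Fin b) → Fin q,
      |levelDist (coloring q) b i n ω - levelDist (coloring q) b j n ω| := by
    classical
    unfold pdet
    refine Finset.sum_le_sum fun ω _ => ?_
    by_cases hD : DetP q b n i ω
    · rw [if_pos hD, hD j hij, sub_zero, abs_of_nonneg (hnn ω)]
    · rw [if_neg hD]
      exact abs_nonneg _
  unfold tvDist
  linarith

/-- For every `δ > 0`, for all sufficiently large `q` and all
`b ≥ (1+δ) q log q`, the reconstruction problem for the `b`-ary tree and the
`q`-coloring channel is solvable. -/
theorem coloring_solvable (δ : ℝ) (hδ : 0 < δ) :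
    ∃ q₀ : ℕ, ∀ q : ℕ, q₀ ≤ q → ∀ b : ℕ,
      (1 + δ) * (q : ℝ) * Real.log q ≤ (b : ℝ) →
      ∃ i j : Fin q, ∃ L > 0, Tendsto
        (fun n => tvDist (levelDist (coloring q) b i n) (levelDist (coloring q) b j n))
        atTop (nhds L) := by
  set δ' := min δ 1 with hδ'def
  have hδ'0 : 0 < δ' := lt_min hδ one_pos
  have hδ'1 : δ' ≤ 1 := min_le_right _ _
  have hδδ : δ' ≤ δ := min_le_left _ _
  set p : ℝ := 1 - δ'/4 with hpdef
  have hp0 : 0 ≤ p := by rw [hpdef]; linarith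
  have hp1 : p ≤ 1 := by rw [hpdef]; linarith
  have hev : ∀ᶠ (q : ℕ) in atTop, ((q:ℝ)) ^ (-(δ'/2) : ℝ) < δ'/4 :=
    ((tendsto_rpow_neg_atTop (by positivity)).comp
      tendsto_natCast_atTop_atTop).eventually (gt_mem_nhds (by positivity))
  obtain ⟨q₁, hq₁⟩ := eventually_atTop.1 hev
  refine ⟨max q₁ 3, fun q hqq b hb => ?_⟩
  have hq3 : 3 ≤ q := le_trans (le_max_right _ _) hqq
  have hq2 : 2 ≤ q := by omega
  have hQ3 : (3:ℝ) ≤ (q:ℝ) := by exact_mod_cast hq3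
  have hQ0 : (0:ℝ) < q := by linarith
  have hlog : 0 ≤ Real.log q := Real.log_nonneg (by linarith)
  have hQ1 : (0:ℝ) < (q:ℝ) - 1 := by linarith
  have ht0 : 0 ≤ p * ((q:ℝ)-1)⁻¹ := mul_nonneg hp0 (inv_nonneg.2 (le_of_lt hQ1))
  have ht1 : p * ((q:ℝ)-1)⁻¹ ≤ 1 := by
    rw [← div_eq_mul_inv, div_le_one hQ1]
    linarith
  -- the key numeric estimate : (q-1) (1-t)^b ≤ 1 - p
  have hnum : ((q:ℝ)-1) * (1 - p * ((q:ℝ)-1)⁻¹)^b ≤ 1 - p := by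
    have hbt : (1 + δ'/2) * Real.log q ≤ (b:ℝ) * (p * ((q:ℝ)-1)⁻¹) := by
      have hb' : (1+δ') * (q:ℝ) * Real.log q ≤ (b:ℝ) := by
        refine le_trans ?_ hb
        have h0 : (0:ℝ) ≤ (q:ℝ) * Real.log q := mul_nonneg (by positivity) hlog
        nlinarith
      have h1 : (1+δ') * (q:ℝ) * Real.log q * (p * ((q:ℝ)-1)⁻¹)
          ≤ (b:ℝ) * (p * ((q:ℝ)-1)⁻¹) := mul_le_mul_of_nonneg_right hb' ht0
      refine le_trans ?_ h1
      have hqq1 : (1:ℝ) ≤ (q:ℝ) * ((q:ℝ)-1)⁻¹ := by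
        rw [← div_eq_mul_inv, le_div_iff₀ hQ1]
        linarith
      have hpp : 1 + δ'/2 ≤ (1+δ') * p := by
        rw [hpdef]
        nlinarith
      have expand : (1+δ') * (q:ℝ) * Real.log q * (p * ((q:ℝ)-1)⁻¹)
          = (((1+δ') * p) * ((q:ℝ) * ((q:ℝ)-1)⁻¹)) * Real.log q := by ring
      rw [expand]
      have hAB : (1 + δ'/2) ≤ ((1+δ') * p) * ((q:ℝ) * ((q:ℝ)-1)⁻¹) := by
        nlinarith
      exact mul_le_mul_of_nonneg_right hAB hlog
    have hexp : (1 - p * ((q:ℝ)-1)⁻¹)^b ≤ Real.exp (-((b:ℝ) * (p * ((q:ℝ)-1)⁻¹))) := by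
      calc (1 - p * ((q:ℝ)-1)⁻¹)^b ≤ Real.exp (-(p * ((q:ℝ)-1)⁻¹)) ^ b :=
            pow_le_pow_left₀ (by linarith)
              (by linarith [Real.add_one_le_exp (-(p * ((q:ℝ)-1)⁻¹))]) b
        _ = Real.exp (-((b:ℝ) * (p * ((q:ℝ)-1)⁻¹))) := by
            rw [← Real.exp_nat_mul]
            congr 1
            ring
    have hexp2 : Real.exp (-((b:ℝ) * (p * ((q:ℝ)-1)⁻¹)))
        ≤ Real.exp (-((1+δ'/2) * Real.log q)) := Real.exp_le_exp.2 (by linarith)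
    have hrpow : Real.exp (-((1+δ'/2) * Real.log q)) = (q:ℝ) ^ (-(1+δ'/2) : ℝ) := by
      rw [Real.rpow_def_of_pos hQ0]
      congr 1
      ring
    have hchain : (1 - p * ((q:ℝ)-1)⁻¹)^b ≤ (q:ℝ) ^ (-(1+δ'/2) : ℝ) :=
      hexp.trans (hexp2.trans_eq hrpow)
    have hrnn : (0:ℝ) ≤ (q:ℝ) ^ (-(1+δ'/2) : ℝ) := Real.rpow_nonneg (le_of_lt hQ0) _
    have hpow0 : 0 ≤ (1 - p * ((q:ℝ)-1)⁻¹)^b := pow_nonneg (by linarith) b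
    have hmain : ((q:ℝ)-1) * (1 - p * ((q:ℝ)-1)⁻¹)^b ≤ (q:ℝ) * ((q:ℝ) ^ (-(1+δ'/2) : ℝ)) := by
      nlinarith
    have hcollapse : (q:ℝ) * ((q:ℝ) ^ (-(1+δ'/2) : ℝ)) = (q:ℝ) ^ (-(δ'/2) : ℝ) := by
      have h := Real.rpow_add hQ0 (1:ℝ) (-(1+δ'/2))
      rw [Real.rpow_one] at h
      rw [← h]
      congr 1
      ring
    have hfin : (q:ℝ) ^ (-(δ'/2) : ℝ) < δ'/4 := hq₁ q (le_trans (le_max_left _ _) hqq)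
    rw [hpdef]
    calc ((q:ℝ)-1) * (1 - p * ((q:ℝ)-1)⁻¹)^b ≤ (q:ℝ) ^ (-(δ'/2) : ℝ) := by
          rw [← hcollapse]; exact hmain
      _ ≤ δ'/4 := le_of_lt hfin
      _ = 1 - (1 - δ'/4) := by ring
  -- the invariant : every level determines the root with probability ≥ p
  have hpd : ∀ n (jj : Fin q), p ≤ pdet q b n jj := by
    intro n
    induction n with
    | zero => intro jj; rw [pdet_zero]; exact hp1
    | succ n ihn =>
      intro jj
      refine le_trans ?_ (pdet_rec hq2 hp0 hp1 n ihn jj)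
      linarith
  have h0q : 0 < q := by omega
  have h1q : 1 < q := by omega
  refine ⟨⟨0, h0q⟩, ⟨1, h1q⟩, ?_⟩
  have hij : (⟨1, h1q⟩ : Fin q) ≠ ⟨0, h0q⟩ := by
    intro h
    have h' := congrArg Fin.val h
    simp at h'
  have hnn : ∀ (n : ℕ) ω, 0 ≤ levelDist (coloring q) b (⟨0, h0q⟩ : Fin q) n ω :=
    fun n ω => levelDist_nonneg (coloring_nonneg (by omega)) b _ n ω
  have hanti : Antitone (fun n => tvDist (levelDist (coloring q) b (⟨0, h0q⟩ : Fin q) n)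
      (levelDist (coloring q) b (⟨1, h1q⟩ : Fin q) n)) :=
    antitone_nat_of_succ_le fun n => tv_mono hq2 _ _ n
  have hbdd : BddBelow (Set.range (fun n => tvDist (levelDist (coloring q) b (⟨0, h0q⟩ : Fin q) n)
      (levelDist (coloring q) b (⟨1, h1q⟩ : Fin q) n))) := by
    refine ⟨0, ?_⟩
    rintro x ⟨n, rfl⟩
    exact tv_nonneg _ _
  have hlow : ∀ n, p/2 ≤ tvDist (levelDist (coloring q) b (⟨0, h0q⟩ : Fin q) n)
      (levelDist (coloring q) b (⟨1, h1q⟩ : Fin q) n) := by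
    intro n
    have h1 := tv_ge n hij (hnn n)
    have h2 := hpd n ⟨0, h0q⟩
    have h3 := h2.trans h1
    clear_value p δ'
    linarith [h3]
  refine ⟨⨅ n, tvDist (levelDist (coloring q) b (⟨0, h0q⟩ : Fin q) n)
      (levelDist (coloring q) b (⟨1, h1q⟩ : Fin q) n), ?_, tendsto_atTop_ciInf hanti hbdd⟩
  have h3 := le_ciInf hlow
  have hp34 : (3:ℝ)/4 ≤ p := by rw [hpdef]; linarith
  linarith
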